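/- Let P = s⁵t − st⁵ ∈ ℂ[s,t]. Then the fourth transvectant of P with itself vanishes identically: Σ_{l=0}^{4} (−1)^l · C(4,l) · (∂_s^{4−l}∂_t^{l} P)·(∂_s^{l}∂_t^{4−l} P) = 0. (This is the vanishing of the spin 2 component among the quadratic polynomials in the spin 3 multiplet of projective coordinates for the octahedral quotient, which furnishes the quadratic relations.) -/
import Mathlib


open MvPolynomial Finset

/- Variables of `ℂ[s,t]`: `0 ↦ s`, `1 ↦ t`. -/

/-- The lowest-degree invariant of the binary tetrahedral group, `P = s⁵t − st⁵`. -/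
noncomputable def P : MvPolynomial (Fin 2) ℂ :=
  X 0 ^ 5 * X 1 - X 0 * X 1 ^ 5

/-- `∂_s` as a function on `ℂ[s,t]`. -/
noncomputable def Ds (f : MvPolynomial (Fin 2) ℂ) : MvPolynomial (Fin 2) ℂ := pderiv 0 f

/-- `∂_t` as a function on `ℂ[s,t]`. -/
noncomputable def Dt (f : MvPolynomial (Fin 2) ℂ) : MvPolynomial (Fin 2) ℂ := pderiv 1 f

lemma dsSub (f g : MvPolynomial (Fin 2) ℂ) : Ds (f - g) = Ds f - Ds g := by simp [Ds]
lemma dtSub (f g : MvPolynomial (Fin 2) ℂ) : Dt (f - g) = Dt f - Dt g := by simp [Dt]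
lemma dsNeg (f : MvPolynomial (Fin 2) ℂ) : Ds (-f) = -Ds f := by simp [Ds]
lemma dtNeg (f : MvPolynomial (Fin 2) ℂ) : Dt (-f) = -Dt f := by simp [Dt]
lemma pdN (i : Fin 2) (n : ℕ) [n.AtLeastTwo] :
    (pderiv i) (OfNat.ofNat n : MvPolynomial (Fin 2) ℂ) = 0 := by
  rw [← Nat.cast_ofNat (R := MvPolynomial (Fin 2) ℂ), ← C_eq_coe_nat]; simp
lemma dsSmul (n : ℕ) [n.AtLeastTwo] (f : MvPolynomial (Fin 2) ℂ) :
    Ds ((OfNat.ofNat n : MvPolynomial (Fin 2) ℂ) * f)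
    = (OfNat.ofNat n : MvPolynomial (Fin 2) ℂ) * Ds f := by
  rw [Ds, pderiv_mul, pdN]; rw [Ds]; ring
lemma dtSmul (n : ℕ) [n.AtLeastTwo] (f : MvPolynomial (Fin 2) ℂ) :
    Dt ((OfNat.ofNat n : MvPolynomial (Fin 2) ℂ) * f)
    = (OfNat.ofNat n : MvPolynomial (Fin 2) ℂ) * Dt f := by
  rw [Dt, pderiv_mul, pdN]; rw [Dt]; ring

lemma dsMon (m n : ℕ) : Ds (X 0 ^ m * X 1 ^ n)
    = (m : MvPolynomial (Fin 2) ℂ) * (X 0 ^ (m - 1) * X 1 ^ n) := by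
  simp [Ds, pderiv_X_self, pderiv_X_of_ne (show (1 : Fin 2) ≠ 0 by decide)]
  ring

lemma dtMon (m n : ℕ) : Dt (X 0 ^ m * X 1 ^ n)
    = (n : MvPolynomial (Fin 2) ℂ) * (X 0 ^ m * X 1 ^ (n - 1)) := by
  simp [Dt, pderiv_X_self, pderiv_X_of_ne (show (0 : Fin 2) ≠ 1 by decide)]
  ring

lemma Peq : P = X 0 ^ 5 * X 1 ^ 1 - X 0 ^ 1 * X 1 ^ 5 := by simp [P]

local notation "M" m:max n:max => (X 0 ^ m * X 1 ^ n : MvPolynomial (Fin 2) ℂ)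

lemma dtP : Dt P = M 5 0 - 5 * M 1 4 := by
  rw [Peq, dtSub, dtMon, dtMon]; push_cast; ring
lemma dt2P : Dt (Dt P) = -(20 * M 1 3) := by
  rw [dtP, dtSub, dtSmul, dtMon, dtMon]; push_cast; ring
lemma dt3P : Dt (Dt (Dt P)) = -(60 * M 1 2) := by
  rw [dt2P, dtNeg, dtSmul, dtMon]; push_cast; ring
lemma dt4P : Dt (Dt (Dt (Dt P))) = -(120 * M 1 1) := by
  rw [dt3P, dtNeg, dtSmul, dtMon]; push_cast; ring

lemma dsP : Ds P = 5 * M 4 1 - M 0 5 := by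
  rw [Peq, dsSub, dsMon, dsMon]; push_cast; ring
lemma ds2P : Ds (Ds P) = 20 * M 3 1 := by
  rw [dsP, dsSub, dsSmul, dsMon, dsMon]; push_cast; ring
lemma ds3P : Ds (Ds (Ds P)) = 60 * M 2 1 := by
  rw [ds2P, dsSmul, dsMon]; push_cast; ring
lemma ds4P : Ds (Ds (Ds (Ds P))) = 120 * M 1 1 := by
  rw [ds3P, dsSmul, dsMon]; push_cast; ring

lemma dsdtP : Ds (Dt P) = 5 * M 4 0 - 5 * M 0 4 := by
  rw [dtP, dsSub, dsSmul, dsMon, dsMon]; push_cast; ring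
lemma ds2dtP : Ds (Ds (Dt P)) = 20 * M 3 0 := by
  rw [dsdtP, dsSub, dsSmul, dsSmul, dsMon, dsMon]; push_cast; ring
lemma ds3dtP : Ds (Ds (Ds (Dt P))) = 60 * M 2 0 := by
  rw [ds2dtP, dsSmul, dsMon]; push_cast; ring

lemma dsdt2P : Ds (Dt (Dt P)) = -(20 * M 0 3) := by
  rw [dt2P, dsNeg, dsSmul, dsMon]; push_cast; ring
lemma ds2dt2P : Ds (Ds (Dt (Dt P))) = 0 := by
  rw [dsdt2P, dsNeg, dsSmul, dsMon]; push_cast; ring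

lemma dsdt3P : Ds (Dt (Dt (Dt P))) = -(60 * M 0 2) := by
  rw [dt3P, dsNeg, dsSmul, dsMon]; push_cast; ring

/-- The fourth transvectant of `P` with itself (the spin 2 component of the quadratic
polynomials in the spin 3 multiplet) vanishes. -/
theorem fourth_transvectant_P_vanishes :
    ∑ l ∈ range 5,
        (-1 : MvPolynomial (Fin 2) ℂ) ^ l * (Nat.choose 4 l : MvPolynomial (Fin 2) ℂ) *
          (Ds^[4 - l] (Dt^[l] P)) * (Ds^[l] (Dt^[4 - l] P)) = 0 := by
  simp only [Finset.sum_range_succ, Finset.sum_range_zero, Function.iterate_succ,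
    Function.iterate_zero, Function.comp_apply, id_eq]
  norm_num
  rw [ds4P, dt4P, ds3dtP, dsdt3P, ds2dt2P]
  ring
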